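/- Let A₁, A₂, A₃ be nonnegative n×n real matrices. Then ‖A₁^{(1/3)} ∘ A₂^{(1/3)} ∘ A₃^{(1/3)}‖ ≤ ρ((A₁ᵀA₂A₃ᵀA₁A₂ᵀA₃)^{(1/3)} ∘ (A₂ᵀA₃A₁ᵀA₂A₃ᵀA₁)^{(1/3)} ∘ (A₃ᵀA₁A₂ᵀA₃A₁ᵀA₂)^{(1/3)})^{1/6} ≤ ρ(A₁A₂ᵀA₃A₁ᵀA₂A₃ᵀ)^{1/6}. -/

import Mathlib

open Matrix

/-- Spectral radius of a real matrix: max modulus of its (complex) eigenvalues. -/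
noncomputable def specRad {N : Type*} [Fintype N] [DecidableEq N] (A : Matrix N N ℝ) : ℝ :=
  (spectralRadius ℂ (A.map Complex.ofReal)).toReal

/-- Operator norm induced by the Euclidean (ℓ²) norm. -/
noncomputable def l2OpNorm {N : Type*} [Fintype N] [DecidableEq N] (A : Matrix N N ℝ) : ℝ :=
  ‖Matrix.toEuclideanCLM (𝕜 := ℝ) A‖

/-- Entrywise α-th power (with the convention 0^0 = 1, as for `Real.rpow`). -/
noncomputable def hadPow {N : Type*} (A : Matrix N N ℝ) (α : ℝ) : Matrix N N ℝ :=
  fun i j => A i j ^ α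

section Auxiliary

open Filter Topology Finset
open scoped NNReal ENNReal

set_option linter.unusedSectionVars false
set_option maxHeartbeats 1000000

attribute [local instance] Matrix.linftyOpNormedRing Matrix.linftyOpNormedAlgebra

variable {N : Type*} [Fintype N] [DecidableEq N]

instance : CompleteSpace (Matrix N N ℂ) := FiniteDimensional.complete ℂ _

/-! ### Generic Hölder inequality for three functions -/

lemma holder3 {ι : Type*} (s : Finset ι) (f g h : ι → ℝ) (hf : ∀ i, 0 ≤ f i)
    (hg : ∀ i, 0 ≤ g i) (hh : ∀ i, 0 ≤ h i) :
    ∑ i ∈ s, f i * g i * h i ≤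
      (∑ i ∈ s, f i ^ (3:ℝ)) ^ (1/3:ℝ) *
        ((∑ i ∈ s, g i ^ (3:ℝ)) ^ (1/3:ℝ) * (∑ i ∈ s, h i ^ (3:ℝ)) ^ (1/3:ℝ)) := by
  have hpq : Real.HolderConjugate 3 (3/2) := Real.holderConjugate_iff.mpr ⟨by norm_num, by norm_num⟩
  have h22 : Real.HolderConjugate 2 2 := Real.holderConjugate_iff.mpr ⟨by norm_num, by norm_num⟩
  have step1 := Real.inner_le_Lp_mul_Lq_of_nonneg s hpq (f := f) (g := fun i => g i * h i)
      (fun i _ => hf i) (fun i _ => mul_nonneg (hg i) (hh i))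
  have step2 := Real.inner_le_Lp_mul_Lq_of_nonneg s h22 (f := fun i => g i ^ (3/2:ℝ))
      (g := fun i => h i ^ (3/2:ℝ)) (fun i _ => Real.rpow_nonneg (hg i) _)
      (fun i _ => Real.rpow_nonneg (hh i) _)
  have e1 : ∀ i, (g i * h i) ^ (3/2:ℝ) = g i ^ (3/2:ℝ) * h i ^ (3/2:ℝ) := fun i =>
    Real.mul_rpow (hg i) (hh i)
  have e2 : ∀ (x : ι → ℝ) (hx : ∀ i, 0 ≤ x i) i, (x i ^ (3/2:ℝ)) ^ (2:ℝ) = x i ^ (3:ℝ) := by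
    intro x hx i
    rw [← Real.rpow_mul (hx i)]
    norm_num
  calc ∑ i ∈ s, f i * g i * h i = ∑ i ∈ s, f i * (g i * h i) := by
        simp [mul_assoc]
    _ ≤ (∑ i ∈ s, f i ^ (3:ℝ)) ^ (1/3:ℝ) * (∑ i ∈ s, (g i * h i) ^ (3/2:ℝ)) ^ (1/(3/2):ℝ) :=
        step1
    _ ≤ (∑ i ∈ s, f i ^ (3:ℝ)) ^ (1/3:ℝ) *
        ((∑ i ∈ s, g i ^ (3:ℝ)) ^ (1/3:ℝ) * (∑ i ∈ s, h i ^ (3:ℝ)) ^ (1/3:ℝ)) := by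
      gcongr
      · exact Real.rpow_nonneg (sum_nonneg fun i _ => Real.rpow_nonneg (hf i) _) _
      have hb : ∑ i ∈ s, (g i * h i) ^ (3/2:ℝ) ≤
          (∑ i ∈ s, g i ^ (3:ℝ)) ^ (1/2:ℝ) * (∑ i ∈ s, h i ^ (3:ℝ)) ^ (1/2:ℝ) := by
        calc ∑ i ∈ s, (g i * h i) ^ (3/2:ℝ)
            = ∑ i ∈ s, g i ^ (3/2:ℝ) * h i ^ (3/2:ℝ) := by simp_rw [e1]
          _ ≤ (∑ i ∈ s, (g i ^ (3/2:ℝ)) ^ (2:ℝ)) ^ (1/2:ℝ) *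
              (∑ i ∈ s, (h i ^ (3/2:ℝ)) ^ (2:ℝ)) ^ (1/2:ℝ) := step2
          _ = (∑ i ∈ s, g i ^ (3:ℝ)) ^ (1/2:ℝ) * (∑ i ∈ s, h i ^ (3:ℝ)) ^ (1/2:ℝ) := by
              simp_rw [e2 g hg, e2 h hh]
      calc (∑ i ∈ s, (g i * h i) ^ (3/2:ℝ)) ^ (1/(3/2):ℝ)
          ≤ ((∑ i ∈ s, g i ^ (3:ℝ)) ^ (1/2:ℝ) * (∑ i ∈ s, h i ^ (3:ℝ)) ^ (1/2:ℝ)) ^ (1/(3/2):ℝ) := by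
            apply Real.rpow_le_rpow (sum_nonneg fun i _ =>
              Real.rpow_nonneg (mul_nonneg (hg i) (hh i)) _) hb (by norm_num)
        _ = (∑ i ∈ s, g i ^ (3:ℝ)) ^ (1/3:ℝ) * (∑ i ∈ s, h i ^ (3:ℝ)) ^ (1/3:ℝ) := by
            rw [Real.mul_rpow (Real.rpow_nonneg (sum_nonneg fun i _ => Real.rpow_nonneg (hg i) _) _)
              (Real.rpow_nonneg (sum_nonneg fun i _ => Real.rpow_nonneg (hh i) _) _),
              ← Real.rpow_mul (sum_nonneg fun i _ => Real.rpow_nonneg (hg i) _),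
              ← Real.rpow_mul (sum_nonneg fun i _ => Real.rpow_nonneg (hh i) _)]
            norm_num

lemma rpow_swap {x : ℝ} (hx : 0 ≤ x) (a b : ℝ) : (x ^ a) ^ b = (x ^ b) ^ a := by
  rw [← Real.rpow_mul hx, ← Real.rpow_mul hx, mul_comm]

/-! ### Entrywise nonnegativity and comparison machinery -/

def MNonneg (M : Matrix N N ℝ) : Prop := ∀ i j, 0 ≤ M i j

noncomputable def crh (X Y Z : Matrix N N ℝ) : Matrix N N ℝ :=
  hadPow X (1/3) ⊙ hadPow Y (1/3) ⊙ hadPow Z (1/3)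

lemma crh_apply (X Y Z : Matrix N N ℝ) (i j : N) :
    crh X Y Z i j = X i j ^ (1/3:ℝ) * Y i j ^ (1/3:ℝ) * Z i j ^ (1/3:ℝ) := rfl

lemma crh_nonneg {X Y Z : Matrix N N ℝ} (hX : MNonneg X) (hY : MNonneg Y) (hZ : MNonneg Z) :
    MNonneg (crh X Y Z) := fun i j =>
  mul_nonneg (mul_nonneg (Real.rpow_nonneg (hX i j) _) (Real.rpow_nonneg (hY i j) _))
    (Real.rpow_nonneg (hZ i j) _)

lemma crh_rot (X Y Z : Matrix N N ℝ) : crh X Y Z = crh Y Z X := by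
  ext i j
  simp only [crh_apply]
  ring

lemma crh_transpose (X Y Z : Matrix N N ℝ) : (crh X Y Z)ᵀ = crh Xᵀ Yᵀ Zᵀ := by
  ext i j
  rfl

lemma MNonneg.mul {M P : Matrix N N ℝ} (hM : MNonneg M) (hP : MNonneg P) : MNonneg (M * P) :=
  fun i j => sum_nonneg fun k _ => mul_nonneg (hM i k) (hP k j)

lemma MNonneg.pow {M : Matrix N N ℝ} (hM : MNonneg M) (k : ℕ) : MNonneg (M ^ k) := by
  induction k with
  | zero => intro i j; simp [Matrix.one_apply]; split <;> norm_num
  | succ n ih => rw [pow_succ]; exact ih.mul hM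

lemma MNonneg.transpose {M : Matrix N N ℝ} (hM : MNonneg M) : MNonneg Mᵀ := fun i j => hM j i

lemma entry_mul_le {M M' P P' : Matrix N N ℝ} (hMM' : ∀ i j, M i j ≤ M' i j)
    (hPP' : ∀ i j, P i j ≤ P' i j) (hP : MNonneg P) (hM' : MNonneg M') :
    ∀ i j, (M * P) i j ≤ (M' * P') i j := fun i j => by
  simp only [Matrix.mul_apply]
  exact sum_le_sum fun k _ => mul_le_mul (hMM' i k) (hPP' k j) (hP k j) (hM' i k)

lemma entry_pow_le {M M' : Matrix N N ℝ} (hM : MNonneg M) (hM' : MNonneg M')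
    (h : ∀ i j, M i j ≤ M' i j) (k : ℕ) : ∀ i j, (M ^ k) i j ≤ (M' ^ k) i j := by
  induction k with
  | zero => intro i j; simp
  | succ n ih =>
      rw [pow_succ, pow_succ]
      exact entry_mul_le ih h hM (hM'.pow n)

/-- Key Hölder step : entrywise bound for a product of two entrywise cube-root Hadamard
products. -/
lemma crh_mul_le {X Y Z X' Y' Z' : Matrix N N ℝ} (hX : MNonneg X) (hY : MNonneg Y)
    (hZ : MNonneg Z) (hX' : MNonneg X') (hY' : MNonneg Y') (hZ' : MNonneg Z') :
    ∀ i j, (crh X Y Z * crh X' Y' Z') i j ≤ crh (X * X') (Y * Y') (Z * Z') i j := by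
  intro i j
  rw [Matrix.mul_apply, crh_apply]
  have key := holder3 (Finset.univ) (fun k => (X i k * X' k j) ^ (1/3:ℝ))
      (fun k => (Y i k * Y' k j) ^ (1/3:ℝ)) (fun k => (Z i k * Z' k j) ^ (1/3:ℝ))
      (fun k => Real.rpow_nonneg (mul_nonneg (hX i k) (hX' k j)) _)
      (fun k => Real.rpow_nonneg (mul_nonneg (hY i k) (hY' k j)) _)
      (fun k => Real.rpow_nonneg (mul_nonneg (hZ i k) (hZ' k j)) _)
  have e3 : ∀ (t : ℝ), 0 ≤ t → (t ^ (1/3:ℝ)) ^ (3:ℝ) = t := by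
    intro t ht; rw [← Real.rpow_mul ht]; norm_num
  calc ∑ k, crh X Y Z i k * crh X' Y' Z' k j
      = ∑ k, (X i k * X' k j) ^ (1/3:ℝ) * (Y i k * Y' k j) ^ (1/3:ℝ) *
          (Z i k * Z' k j) ^ (1/3:ℝ) := by
        apply sum_congr rfl; intro k _
        simp only [crh_apply]
        rw [Real.mul_rpow (hX i k) (hX' k j), Real.mul_rpow (hY i k) (hY' k j),
          Real.mul_rpow (hZ i k) (hZ' k j)]
        ring
    _ ≤ (∑ k, ((X i k * X' k j) ^ (1/3:ℝ)) ^ (3:ℝ)) ^ (1/3:ℝ) *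
        ((∑ k, ((Y i k * Y' k j) ^ (1/3:ℝ)) ^ (3:ℝ)) ^ (1/3:ℝ) *
         (∑ k, ((Z i k * Z' k j) ^ (1/3:ℝ)) ^ (3:ℝ)) ^ (1/3:ℝ)) := key
    _ = (X * X') i j ^ (1/3:ℝ) * ((Y * Y') i j ^ (1/3:ℝ) * (Z * Z') i j ^ (1/3:ℝ)) := by
        have eX : (∑ k, ((X i k * X' k j) ^ (1/3:ℝ)) ^ (3:ℝ)) = (X * X') i j := by
          rw [Matrix.mul_apply]; exact sum_congr rfl fun k _ => e3 _ (mul_nonneg (hX i k) (hX' k j))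
        have eY : (∑ k, ((Y i k * Y' k j) ^ (1/3:ℝ)) ^ (3:ℝ)) = (Y * Y') i j := by
          rw [Matrix.mul_apply]; exact sum_congr rfl fun k _ => e3 _ (mul_nonneg (hY i k) (hY' k j))
        have eZ : (∑ k, ((Z i k * Z' k j) ^ (1/3:ℝ)) ^ (3:ℝ)) = (Z * Z') i j := by
          rw [Matrix.mul_apply]; exact sum_congr rfl fun k _ => e3 _ (mul_nonneg (hZ i k) (hZ' k j))
        rw [eX, eY, eZ]
    _ = _ := by ring

lemma entry_mul_crh_le' {P Q X Y Z X' Y' Z' : Matrix N N ℝ}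
    (hP : ∀ i j, P i j ≤ crh X Y Z i j) (hQ : Q = crh X' Y' Z')
    (hX : MNonneg X) (hY : MNonneg Y) (hZ : MNonneg Z)
    (hX' : MNonneg X') (hY' : MNonneg Y') (hZ' : MNonneg Z') :
    ∀ i j, (P * Q) i j ≤ crh (X * X') (Y * Y') (Z * Z') i j := by
  subst hQ
  intro i j
  exact (entry_mul_le hP (fun _ _ => le_rfl) (crh_nonneg hX' hY' hZ')
    (crh_nonneg hX hY hZ) i j).trans (crh_mul_le hX hY hZ hX' hY' hZ' i j)

lemma crh_pow_le {X Y Z : Matrix N N ℝ} (hX : MNonneg X) (hY : MNonneg Y) (hZ : MNonneg Z)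
    (k : ℕ) (hk : 1 ≤ k) : ∀ i j, ((crh X Y Z) ^ k) i j ≤ crh (X ^ k) (Y ^ k) (Z ^ k) i j := by
  induction k with
  | zero => omega
  | succ n ih =>
      rcases Nat.eq_or_lt_of_le hk with h1 | h2
      · intro i j; simp [← h1]
      · have hn : 1 ≤ n := by omega
        intro i j
        rw [pow_succ, pow_succ, pow_succ, pow_succ]
        calc ((crh X Y Z) ^ n * crh X Y Z) i j
            ≤ (crh (X ^ n) (Y ^ n) (Z ^ n) * crh X Y Z) i j :=
              entry_mul_le (ih hn) (fun i j => le_rfl) (crh_nonneg hX hY hZ)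
                (crh_nonneg (hX.pow n) (hY.pow n) (hZ.pow n)) i j
          _ ≤ _ := crh_mul_le (hX.pow n) (hY.pow n) (hZ.pow n) hX hY hZ i j

/-! ### The `L∞` operator norm : basic facts -/

lemma row_sum_le_norm {A : Matrix N N ℝ} (hA : MNonneg A) (i : N) : ∑ j, A i j ≤ ‖A‖ := by
  rw [Matrix.linfty_opNorm_def]
  have h1 : (∑ j, ‖A i j‖₊ : ℝ≥0) ≤ (Finset.univ.sup fun i : N => ∑ j, ‖A i j‖₊) :=
    Finset.le_sup (f := fun i : N => ∑ j, ‖A i j‖₊) (mem_univ i)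
  calc ∑ j, A i j = ((∑ j, ‖A i j‖₊ : ℝ≥0) : ℝ) := by
        push_cast
        exact sum_congr rfl fun j _ => by
          rw [Real.norm_eq_abs, abs_of_nonneg (hA i j)]
      _ ≤ _ := by exact_mod_cast h1

lemma norm_le_of_rows {A : Matrix N N ℝ} {r : ℝ≥0} (h : ∀ i, (∑ j, ‖A i j‖₊ : ℝ≥0) ≤ r) :
    ‖A‖ ≤ r := by
  rw [Matrix.linfty_opNorm_def]
  exact_mod_cast Finset.sup_le fun i _ => h i

lemma norm_mono_entry {A B : Matrix N N ℝ} (hA : MNonneg A) (h : ∀ i j, A i j ≤ B i j) :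
    ‖A‖ ≤ ‖B‖ := by
  rw [Matrix.linfty_opNorm_def, Matrix.linfty_opNorm_def]
  have : ∀ i, (∑ j, ‖A i j‖₊ : ℝ≥0) ≤ ∑ j, ‖B i j‖₊ := by
    intro i
    refine sum_le_sum fun j _ => ?_
    have : |A i j| ≤ |B i j| := by
      rw [abs_of_nonneg (hA i j), abs_of_nonneg ((hA i j).trans (h i j))]
      exact h i j
    simpa [← NNReal.coe_le_coe, coe_nnnorm, Real.norm_eq_abs] using this
  exact_mod_cast Finset.sup_mono_fun fun i _ => this i

lemma crh_norm_le {X Y Z : Matrix N N ℝ} (hX : MNonneg X) (hY : MNonneg Y) (hZ : MNonneg Z) :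
    ‖crh X Y Z‖ ≤ ‖X‖ ^ (1/3:ℝ) * (‖Y‖ ^ (1/3:ℝ) * ‖Z‖ ^ (1/3:ℝ)) := by
  have hXn : (0:ℝ) ≤ ‖X‖ := norm_nonneg _
  have key : ∀ i, ∑ j, crh X Y Z i j ≤ ‖X‖ ^ (1/3:ℝ) * (‖Y‖ ^ (1/3:ℝ) * ‖Z‖ ^ (1/3:ℝ)) := by
    intro i
    have e3 : ∀ (t : ℝ), 0 ≤ t → (t ^ (1/3:ℝ)) ^ (3:ℝ) = t := by
      intro t ht; rw [← Real.rpow_mul ht]; norm_num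
    have h := holder3 Finset.univ (fun j => X i j ^ (1/3:ℝ)) (fun j => Y i j ^ (1/3:ℝ))
        (fun j => Z i j ^ (1/3:ℝ)) (fun j => Real.rpow_nonneg (hX i j) _)
        (fun j => Real.rpow_nonneg (hY i j) _) (fun j => Real.rpow_nonneg (hZ i j) _)
    have eX : (∑ j, (X i j ^ (1/3:ℝ)) ^ (3:ℝ)) = ∑ j, X i j :=
      sum_congr rfl fun j _ => e3 _ (hX i j)
    have eY : (∑ j, (Y i j ^ (1/3:ℝ)) ^ (3:ℝ)) = ∑ j, Y i j :=
      sum_congr rfl fun j _ => e3 _ (hY i j)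
    have eZ : (∑ j, (Z i j ^ (1/3:ℝ)) ^ (3:ℝ)) = ∑ j, Z i j :=
      sum_congr rfl fun j _ => e3 _ (hZ i j)
    rw [eX, eY, eZ] at h
    refine h.trans ?_
    have hgc : ∀ (W : Matrix N N ℝ), MNonneg W →
        (∑ j, W i j) ^ (1/3:ℝ) ≤ ‖W‖ ^ (1/3:ℝ) := fun W hW =>
      Real.rpow_le_rpow (sum_nonneg fun j _ => hW i j) (row_sum_le_norm hW i) (by norm_num)
    exact mul_le_mul (hgc X hX) (mul_le_mul (hgc Y hY) (hgc Z hZ)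
        (Real.rpow_nonneg (sum_nonneg fun j _ => hZ i j) _)
        (Real.rpow_nonneg (norm_nonneg _) _))
      (mul_nonneg (Real.rpow_nonneg (sum_nonneg fun j _ => hY i j) _)
        (Real.rpow_nonneg (sum_nonneg fun j _ => hZ i j) _))
      (Real.rpow_nonneg (norm_nonneg _) _)
  have hkey : ∀ i, (∑ j, ‖crh X Y Z i j‖₊ : ℝ≥0) ≤
      (‖X‖ ^ (1/3:ℝ) * (‖Y‖ ^ (1/3:ℝ) * ‖Z‖ ^ (1/3:ℝ))).toNNReal := by
    intro i
    rw [← NNReal.coe_le_coe]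
    push_cast
    rw [Real.coe_toNNReal _ (by positivity)]
    refine le_trans (le_of_eq ?_) (key i)
    exact sum_congr rfl fun j _ => by
      rw [Real.norm_eq_abs, abs_of_nonneg (crh_nonneg hX hY hZ i j)]
  refine (norm_le_of_rows hkey).trans ?_
  rw [Real.coe_toNNReal _ (by positivity)]

/-! ### Gelfand's formula, real version -/

lemma map_pow_ofReal (M : Matrix N N ℝ) (k : ℕ) :
    (M.map Complex.ofReal) ^ k = (M ^ k).map Complex.ofReal := by
  have : M.map Complex.ofReal = Complex.ofRealHom.mapMatrix M := rfl
  rw [this, ← map_pow]; rfl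

lemma nnnorm_map_ofReal (X : Matrix N N ℝ) : ‖X.map Complex.ofReal‖₊ = ‖X‖₊ := by
  simp [Matrix.linfty_opNNNorm_def, Matrix.map_apply]

lemma specRad_ne_top (M : Matrix N N ℝ) : spectralRadius ℂ (M.map Complex.ofReal) ≠ ⊤ := by
  refine ne_top_of_le_ne_top ?_
    (spectrum.spectralRadius_le_pow_nnnorm_pow_one_div ℂ (M.map Complex.ofReal) 0)
  exact ENNReal.mul_ne_top (ENNReal.rpow_ne_top_of_nonneg (by norm_num) ENNReal.coe_ne_top)
    (ENNReal.rpow_ne_top_of_nonneg (by norm_num) ENNReal.coe_ne_top)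

lemma gelfand (M : Matrix N N ℝ) :
    Tendsto (fun k : ℕ => ‖M ^ k‖ ^ (1 / (k:ℝ))) atTop (𝓝 (specRad M)) := by
  have h := spectrum.pow_nnnorm_pow_one_div_tendsto_nhds_spectralRadius (M.map Complex.ofReal)
  have h2 := (ENNReal.tendsto_toReal (specRad_ne_top M)).comp h
  convert h2 using 2 with k
  rw [Function.comp_apply, map_pow_ofReal, nnnorm_map_ofReal]
  rw [← ENNReal.toReal_rpow]
  simp
  rfl

lemma specRad_nonneg (M : Matrix N N ℝ) : 0 ≤ specRad M := ENNReal.toReal_nonneg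

lemma tendsto_const_rpow_inv {c : ℝ} (hc : 0 < c) :
    Tendsto (fun k : ℕ => c ^ (1 / (k:ℝ))) atTop (𝓝 1) := by
  have h0 : Tendsto (fun k : ℕ => 1 / (k:ℝ)) atTop (𝓝 0) := tendsto_one_div_atTop_nhds_zero_nat
  have : Tendsto (fun k : ℕ => Real.exp (Real.log c * (1 / (k:ℝ)))) atTop (𝓝 (Real.exp 0)) :=
    (Real.continuous_exp.tendsto 0).comp (by simpa using h0.const_mul (Real.log c))
  simp only [Real.exp_zero] at this
  convert this using 2 with k
  rw [Real.rpow_def_of_pos hc]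

lemma le_specRad {M : Matrix N N ℝ} {q c : ℝ} (hq : 0 ≤ q) (hc : 0 < c)
    (h : ∀ k, 1 ≤ k → q ^ k ≤ c * ‖M ^ k‖) : q ≤ specRad M := by
  have gel := gelfand M
  have hT : Tendsto (fun k : ℕ => c ^ (1/(k:ℝ)) * ‖M ^ k‖ ^ (1/(k:ℝ))) atTop
      (𝓝 (1 * specRad M)) := (tendsto_const_rpow_inv hc).mul gel
  rw [one_mul] at hT
  refine ge_of_tendsto hT ?_
  filter_upwards [eventually_ge_atTop 1] with k hk
  calc q = (q ^ k) ^ (1/(k:ℝ)) := by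
        rw [one_div, Real.pow_rpow_inv_natCast hq (by omega)]
    _ ≤ (c * ‖M ^ k‖) ^ (1/(k:ℝ)) :=
        Real.rpow_le_rpow (pow_nonneg hq k) (h k hk) (by positivity)
    _ = c ^ (1/(k:ℝ)) * ‖M ^ k‖ ^ (1/(k:ℝ)) := Real.mul_rpow hc.le (norm_nonneg _)

lemma iSup_nnnorm_diff_zero (S : Set ℂ) :
    (⨆ k ∈ S, (‖k‖₊ : ℝ≥0∞)) = ⨆ k ∈ S \ {0}, (‖k‖₊ : ℝ≥0∞) := by
  refine le_antisymm ?_ (iSup₂_le fun k hk => le_iSup₂_of_le k hk.1 le_rfl)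
  refine iSup₂_le fun k hk => ?_
  by_cases h : k = 0
  · simp [h]
  · exact le_iSup₂_of_le k ⟨hk, h⟩ le_rfl

lemma specRad_mul_comm (X Y : Matrix N N ℝ) : specRad (X * Y) = specRad (Y * X) := by
  unfold specRad
  have hmap : ∀ (U V : Matrix N N ℝ),
      (U * V).map Complex.ofReal = (U.map Complex.ofReal) * (V.map Complex.ofReal) := by
    intro U V
    have : ∀ (W : Matrix N N ℝ), W.map Complex.ofReal = Complex.ofRealHom.mapMatrix W :=
      fun W => rfl
    rw [this, this, this, ← _root_.map_mul]
  rw [hmap, hmap]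
  congr 1
  unfold spectralRadius
  rw [iSup_nnnorm_diff_zero, iSup_nnnorm_diff_zero (spectrum ℂ _),
    spectrum.nonzero_mul_comm]

/-! ### `ℓ²` operator norm facts -/

lemma sa_nnnorm_pow_le {E : Type*} [NormedRing E] [StarRing E] [CStarRing E] {a : E}
    (ha : IsSelfAdjoint a) (m : ℕ) (hm : 1 ≤ m) : ‖a‖₊ ^ m ≤ ‖a ^ m‖₊ := by
  by_cases h0 : ‖a‖₊ = 0
  · rw [h0, zero_pow (by omega : m ≠ 0)]; exact zero_le
  have hlt : m < 2 ^ m := Nat.lt_two_pow_self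
  have key : ‖a‖₊ ^ (2 ^ m) ≤ ‖a ^ m‖₊ * ‖a‖₊ ^ (2 ^ m - m) := by
    have h1 : ‖a ^ 2 ^ m‖₊ = ‖a‖₊ ^ 2 ^ m := ha.nnnorm_pow_two_pow m
    have h2 : a ^ 2 ^ m = a ^ m * a ^ (2 ^ m - m) := by
      rw [← pow_add]; congr 1; omega
    calc ‖a‖₊ ^ 2 ^ m = ‖a ^ m * a ^ (2 ^ m - m)‖₊ := by rw [← h1, h2]
      _ ≤ ‖a ^ m‖₊ * ‖a ^ (2 ^ m - m)‖₊ := nnnorm_mul_le _ _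
      _ ≤ ‖a ^ m‖₊ * ‖a‖₊ ^ (2 ^ m - m) := by
          gcongr
          exact_mod_cast norm_pow_le' a (by omega)
  have hpos : 0 < ‖a‖₊ ^ (2 ^ m - m) := pow_pos (pos_iff_ne_zero.mpr h0) _
  have : ‖a‖₊ ^ m * ‖a‖₊ ^ (2 ^ m - m) ≤ ‖a ^ m‖₊ * ‖a‖₊ ^ (2 ^ m - m) := by
    rwa [← pow_add, (by omega : m + (2 ^ m - m) = 2 ^ m)]
  exact le_of_mul_le_mul_right this hpos

lemma sa_norm_pow_le {E : Type*} [NormedRing E] [StarRing E] [CStarRing E] {a : E}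
    (ha : IsSelfAdjoint a) (m : ℕ) (hm : 1 ≤ m) : ‖a‖ ^ m ≤ ‖a ^ m‖ := by
  have := sa_nnnorm_pow_le ha m hm
  rw [← NNReal.coe_le_coe] at this
  push_cast at this
  exact this

lemma l2OpNorm_pow_le (B : Matrix N N ℝ) (k : ℕ) (hk : 1 ≤ k) :
    l2OpNorm B ^ (6 * k) ≤ l2OpNorm ((Bᵀ * B) ^ (3 * k)) := by
  set T := Matrix.toEuclideanCLM (𝕜 := ℝ) B with hT
  have hstar : Matrix.toEuclideanCLM (𝕜 := ℝ) (Bᵀ * B) = star T * T := by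
    have h1 : (Bᵀ : Matrix N N ℝ) = star B := by
      rw [Matrix.star_eq_conjTranspose, Matrix.conjTranspose_eq_transpose_of_trivial]
    rw [h1, _root_.map_mul, map_star]
  have hsa : IsSelfAdjoint (star T * T) := IsSelfAdjoint.star_mul_self T
  have hpow : Matrix.toEuclideanCLM (𝕜 := ℝ) ((Bᵀ * B) ^ (3 * k)) = (star T * T) ^ (3 * k) := by
    rw [map_pow, hstar]
  have hCs : ‖star T * T‖ = ‖T‖ * ‖T‖ := by
    rw [ContinuousLinearMap.mul_def, ContinuousLinearMap.star_eq_adjoint]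
    exact T.norm_adjoint_comp_self
  have h1 : ‖T‖ ^ (6 * k) = ‖star T * T‖ ^ (3 * k) := by
    rw [hCs, ← sq, ← pow_mul]
    ring_nf
  unfold l2OpNorm
  rw [hpow]
  calc ‖T‖ ^ (6 * k) = ‖star T * T‖ ^ (3 * k) := h1
    _ ≤ ‖(star T * T) ^ (3 * k)‖ := sa_norm_pow_le hsa (3 * k) (by omega)

lemma euclid_norm_le_sum (y : EuclideanSpace ℝ N) : ‖y‖ ≤ ∑ i, |y i| := by
  rw [EuclideanSpace.norm_eq]
  have h1 : ∑ i, ‖y i‖ ^ 2 ≤ (∑ i, |y i|) ^ 2 := by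
    simp_rw [Real.norm_eq_abs]
    exact sum_sq_le_sq_sum_of_nonneg fun i _ => abs_nonneg _
  calc Real.sqrt (∑ i, ‖y i‖ ^ 2) ≤ Real.sqrt ((∑ i, |y i|) ^ 2) := Real.sqrt_le_sqrt h1
    _ = ∑ i, |y i| := Real.sqrt_sq (sum_nonneg fun i _ => abs_nonneg _)

lemma euclid_coord_le_norm (x : EuclideanSpace ℝ N) (j : N) : |x j| ≤ ‖x‖ := by
  rw [EuclideanSpace.norm_eq]
  have : |x j| ^ 2 ≤ ∑ i, ‖x i‖ ^ 2 := by
    refine Finset.single_le_sum (f := fun i => ‖x i‖ ^ 2)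
      (fun i _ => by positivity) (mem_univ j) |>.trans_eq' ?_
    simp [Real.norm_eq_abs]
  calc |x j| = Real.sqrt (|x j| ^ 2) := (Real.sqrt_sq (abs_nonneg _)).symm
    _ ≤ _ := Real.sqrt_le_sqrt this

lemma l2OpNorm_le_sum (X : Matrix N N ℝ) : l2OpNorm X ≤ ∑ i, ∑ j, |X i j| := by
  refine ContinuousLinearMap.opNorm_le_bound _ (by positivity) fun x => ?_
  have happly : ∀ i, (Matrix.toEuclideanCLM (𝕜 := ℝ) X x) i = ∑ j, X i j * x j := by
    intro i
    rfl
  calc ‖Matrix.toEuclideanCLM (𝕜 := ℝ) X x‖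
      ≤ ∑ i, |(Matrix.toEuclideanCLM (𝕜 := ℝ) X x) i| := euclid_norm_le_sum _
    _ ≤ ∑ i, ∑ j, |X i j| * ‖x‖ := by
        refine sum_le_sum fun i _ => ?_
        rw [happly i]
        calc |∑ j, X i j * x j| ≤ ∑ j, |X i j * x j| := Finset.abs_sum_le_sum_abs _ _
          _ ≤ ∑ j, |X i j| * ‖x‖ := by
              refine sum_le_sum fun j _ => ?_
              rw [abs_mul]
              exact mul_le_mul_of_nonneg_left (euclid_coord_le_norm x j) (abs_nonneg _)
    _ = (∑ i, ∑ j, |X i j|) * ‖x‖ := by simp_rw [← Finset.sum_mul]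

/-! ### The two main inequalities -/

lemma part1 [Nonempty N] (A₁ A₂ A₃ : Matrix N N ℝ)
    (h1 : MNonneg A₁) (h2 : MNonneg A₂) (h3 : MNonneg A₃) :
    l2OpNorm (crh A₁ A₂ A₃) ≤
      specRad (crh (A₁ᵀ * A₂ * A₃ᵀ * A₁ * A₂ᵀ * A₃) (A₂ᵀ * A₃ * A₁ᵀ * A₂ * A₃ᵀ * A₁)
        (A₃ᵀ * A₁ * A₂ᵀ * A₃ * A₁ᵀ * A₂)) ^ ((1:ℝ)/6) := by
  have h1t : MNonneg A₁ᵀ := h1.transpose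
  have h2t : MNonneg A₂ᵀ := h2.transpose
  have h3t : MNonneg A₃ᵀ := h3.transpose
  set B := crh A₁ A₂ A₃ with hBdef
  set C := crh (A₁ᵀ * A₂ * A₃ᵀ * A₁ * A₂ᵀ * A₃) (A₂ᵀ * A₃ * A₁ᵀ * A₂ * A₃ᵀ * A₁)
    (A₃ᵀ * A₁ * A₂ᵀ * A₃ * A₁ᵀ * A₂) with hCdef
  have hB : MNonneg B := crh_nonneg h1 h2 h3
  have hBt : MNonneg Bᵀ := hB.transpose
  have hM₁ : MNonneg (A₁ᵀ * A₂ * A₃ᵀ * A₁ * A₂ᵀ * A₃) :=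
    ((((h1t.mul h2).mul h3t).mul h1).mul h2t).mul h3
  have hM₂ : MNonneg (A₂ᵀ * A₃ * A₁ᵀ * A₂ * A₃ᵀ * A₁) :=
    ((((h2t.mul h3).mul h1t).mul h2).mul h3t).mul h1
  have hM₃ : MNonneg (A₃ᵀ * A₁ * A₂ᵀ * A₃ * A₁ᵀ * A₂) :=
    ((((h3t.mul h1).mul h2t).mul h3).mul h1t).mul h2
  have hCnn : MNonneg C := crh_nonneg hM₁ hM₂ hM₃
  have hBt_eq : Bᵀ = crh A₁ᵀ A₂ᵀ A₃ᵀ := by rw [hBdef, crh_transpose]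
  -- the entrywise key bound
  have c1 : ∀ i j, (Bᵀ * B) i j ≤ crh (A₁ᵀ * A₂) (A₂ᵀ * A₃) (A₃ᵀ * A₁) i j :=
    entry_mul_crh_le' (fun i j => le_of_eq (by rw [hBt_eq]))
      (by rw [hBdef, crh_rot]) h1t h2t h3t h2 h3 h1
  have c2 : ∀ i j, (Bᵀ * B * Bᵀ) i j ≤
      crh (A₁ᵀ * A₂ * A₃ᵀ) (A₂ᵀ * A₃ * A₁ᵀ) (A₃ᵀ * A₁ * A₂ᵀ) i j :=
    entry_mul_crh_le' c1 (by rw [hBt_eq, crh_rot, crh_rot])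
      (h1t.mul h2) (h2t.mul h3) (h3t.mul h1) h3t h1t h2t
  have c3 : ∀ i j, (Bᵀ * B * Bᵀ * B) i j ≤
      crh (A₁ᵀ * A₂ * A₃ᵀ * A₁) (A₂ᵀ * A₃ * A₁ᵀ * A₂) (A₃ᵀ * A₁ * A₂ᵀ * A₃) i j :=
    entry_mul_crh_le' c2 hBdef
      ((h1t.mul h2).mul h3t) ((h2t.mul h3).mul h1t) ((h3t.mul h1).mul h2t) h1 h2 h3
  have c4 : ∀ i j, (Bᵀ * B * Bᵀ * B * Bᵀ) i j ≤
      crh (A₁ᵀ * A₂ * A₃ᵀ * A₁ * A₂ᵀ) (A₂ᵀ * A₃ * A₁ᵀ * A₂ * A₃ᵀ)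
        (A₃ᵀ * A₁ * A₂ᵀ * A₃ * A₁ᵀ) i j :=
    entry_mul_crh_le' c3 (by rw [hBt_eq, crh_rot])
      (((h1t.mul h2).mul h3t).mul h1) (((h2t.mul h3).mul h1t).mul h2)
      (((h3t.mul h1).mul h2t).mul h3) h2t h3t h1t
  have c5 : ∀ i j, (Bᵀ * B * Bᵀ * B * Bᵀ * B) i j ≤ C i j := by
    rw [hCdef]
    exact entry_mul_crh_le' c4 (by rw [hBdef, crh_rot, crh_rot])
      ((((h1t.mul h2).mul h3t).mul h1).mul h2t) ((((h2t.mul h3).mul h1t).mul h2).mul h3t)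
      ((((h3t.mul h1).mul h2t).mul h3).mul h1t) h3 h1 h2
  have hexp : (Bᵀ * B) ^ 3 = Bᵀ * B * Bᵀ * B * Bᵀ * B := by
    rw [pow_succ, pow_succ, pow_one]
    simp only [mul_assoc]
  have hkey : ∀ i j, ((Bᵀ * B) ^ 3) i j ≤ C i j := by
    intro i j; rw [hexp]; exact c5 i j
  have hP3 : MNonneg ((Bᵀ * B) ^ 3) := (hBt.mul hB).pow 3
  have hq6 : l2OpNorm B ^ 6 ≤ specRad C := by
    refine le_specRad (M := C) (pow_nonneg (by unfold l2OpNorm; positivity) 6)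
      (by exact_mod_cast Fintype.card_pos : (0:ℝ) < (Fintype.card N : ℝ)) ?_
    intro k hk
    have t1 : (l2OpNorm B ^ 6) ^ k = l2OpNorm B ^ (6 * k) := (pow_mul _ 6 k).symm
    rw [t1]
    refine (l2OpNorm_pow_le B k hk).trans ?_
    rw [pow_mul (Bᵀ * B) 3 k]
    have hCk : MNonneg (C ^ k) := hCnn.pow k
    calc l2OpNorm (((Bᵀ * B) ^ 3) ^ k) ≤ ∑ i, ∑ j, |(((Bᵀ * B) ^ 3) ^ k) i j| :=
        l2OpNorm_le_sum _
      _ ≤ ∑ i, ∑ j, (C ^ k) i j := by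
          refine sum_le_sum fun i _ => sum_le_sum fun j _ => ?_
          rw [abs_of_nonneg (hP3.pow k i j)]
          exact entry_pow_le hP3 hCnn hkey k i j
      _ ≤ ∑ _i : N, ‖C ^ k‖ := sum_le_sum fun i _ => row_sum_le_norm hCk i
      _ = (Fintype.card N : ℝ) * ‖C ^ k‖ := by
          rw [sum_const, card_univ, nsmul_eq_mul]
  have h0 : (0:ℝ) ≤ l2OpNorm B := by unfold l2OpNorm; positivity
  calc l2OpNorm B = (l2OpNorm B ^ 6) ^ (((6:ℕ):ℝ)⁻¹) :=
      (Real.pow_rpow_inv_natCast h0 (by norm_num)).symm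
    _ ≤ specRad C ^ (((6:ℕ):ℝ)⁻¹) :=
      Real.rpow_le_rpow (pow_nonneg h0 6) hq6 (by positivity)
    _ = specRad C ^ ((1:ℝ)/6) := by norm_num

lemma part2 (A₁ A₂ A₃ : Matrix N N ℝ)
    (h1 : MNonneg A₁) (h2 : MNonneg A₂) (h3 : MNonneg A₃) :
    specRad (crh (A₁ᵀ * A₂ * A₃ᵀ * A₁ * A₂ᵀ * A₃) (A₂ᵀ * A₃ * A₁ᵀ * A₂ * A₃ᵀ * A₁)
        (A₃ᵀ * A₁ * A₂ᵀ * A₃ * A₁ᵀ * A₂)) ^ ((1:ℝ)/6) ≤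
      specRad (A₁ * A₂ᵀ * A₃ * A₁ᵀ * A₂ * A₃ᵀ) ^ ((1:ℝ)/6) := by
  have h1t : MNonneg A₁ᵀ := h1.transpose
  have h2t : MNonneg A₂ᵀ := h2.transpose
  have h3t : MNonneg A₃ᵀ := h3.transpose
  set M₁ := A₁ᵀ * A₂ * A₃ᵀ * A₁ * A₂ᵀ * A₃ with hM₁def
  set M₂ := A₂ᵀ * A₃ * A₁ᵀ * A₂ * A₃ᵀ * A₁ with hM₂def
  set M₃ := A₃ᵀ * A₁ * A₂ᵀ * A₃ * A₁ᵀ * A₂ with hM₃def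
  set D := A₁ * A₂ᵀ * A₃ * A₁ᵀ * A₂ * A₃ᵀ with hDdef
  have hM₁ : MNonneg M₁ := ((((h1t.mul h2).mul h3t).mul h1).mul h2t).mul h3
  have hM₂ : MNonneg M₂ := ((((h2t.mul h3).mul h1t).mul h2).mul h3t).mul h1
  have hM₃ : MNonneg M₃ := ((((h3t.mul h1).mul h2t).mul h3).mul h1t).mul h2
  set C := crh M₁ M₂ M₃ with hCdef
  have hCnn : MNonneg C := crh_nonneg hM₁ hM₂ hM₃
  -- comparison of the spectral radii
  have hρ : Tendsto (fun k : ℕ => (‖M₁ ^ k‖ ^ (1/(k:ℝ))) ^ (1/3:ℝ) *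
      ((‖M₂ ^ k‖ ^ (1/(k:ℝ))) ^ (1/3:ℝ) * (‖M₃ ^ k‖ ^ (1/(k:ℝ))) ^ (1/3:ℝ))) atTop
      (𝓝 (specRad M₁ ^ (1/3:ℝ) * (specRad M₂ ^ (1/3:ℝ) * specRad M₃ ^ (1/3:ℝ)))) :=
    ((gelfand M₁).rpow_const (Or.inr (by norm_num))).mul
      (((gelfand M₂).rpow_const (Or.inr (by norm_num))).mul
        ((gelfand M₃).rpow_const (Or.inr (by norm_num))))
  have hev : (fun k : ℕ => ‖C ^ k‖ ^ (1/(k:ℝ))) ≤ᶠ[atTop]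
      fun k : ℕ => (‖M₁ ^ k‖ ^ (1/(k:ℝ))) ^ (1/3:ℝ) *
        ((‖M₂ ^ k‖ ^ (1/(k:ℝ))) ^ (1/3:ℝ) * (‖M₃ ^ k‖ ^ (1/(k:ℝ))) ^ (1/3:ℝ)) := by
    filter_upwards [eventually_ge_atTop 1] with k hk
    have hCk : ‖C ^ k‖ ≤ ‖M₁ ^ k‖ ^ (1/3:ℝ) * (‖M₂ ^ k‖ ^ (1/3:ℝ) * ‖M₃ ^ k‖ ^ (1/3:ℝ)) := by
      refine (norm_mono_entry (hCnn.pow k) ?_).trans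
        (crh_norm_le (hM₁.pow k) (hM₂.pow k) (hM₃.pow k))
      rw [hCdef]
      exact crh_pow_le hM₁ hM₂ hM₃ k hk
    calc ‖C ^ k‖ ^ (1/(k:ℝ))
        ≤ (‖M₁ ^ k‖ ^ (1/3:ℝ) * (‖M₂ ^ k‖ ^ (1/3:ℝ) * ‖M₃ ^ k‖ ^ (1/3:ℝ))) ^ (1/(k:ℝ)) :=
          Real.rpow_le_rpow (norm_nonneg _) hCk (by positivity)
      _ = (‖M₁ ^ k‖ ^ (1/(k:ℝ))) ^ (1/3:ℝ) *
          ((‖M₂ ^ k‖ ^ (1/(k:ℝ))) ^ (1/3:ℝ) * (‖M₃ ^ k‖ ^ (1/(k:ℝ))) ^ (1/3:ℝ)) := by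
          rw [Real.mul_rpow (Real.rpow_nonneg (norm_nonneg _) _)
              (mul_nonneg (Real.rpow_nonneg (norm_nonneg _) _)
                (Real.rpow_nonneg (norm_nonneg _) _)),
            Real.mul_rpow (Real.rpow_nonneg (norm_nonneg _) _)
              (Real.rpow_nonneg (norm_nonneg _) _),
            rpow_swap (norm_nonneg (M₁ ^ k)) (1/3:ℝ) (1/(k:ℝ)), rpow_swap (norm_nonneg (M₂ ^ k)) (1/3:ℝ) (1/(k:ℝ)), rpow_swap (norm_nonneg (M₃ ^ k)) (1/3:ℝ) (1/(k:ℝ))]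
  have h2' : specRad C ≤ specRad M₁ ^ (1/3:ℝ) * (specRad M₂ ^ (1/3:ℝ) * specRad M₃ ^ (1/3:ℝ)) :=
    le_of_tendsto_of_tendsto (gelfand C) hρ hev
  -- all the cyclic products have the same spectral radius
  have e1 : specRad D = specRad M₂ := by
    rw [hDdef, hM₂def]
    simpa only [← mul_assoc] using specRad_mul_comm A₁ (A₂ᵀ * (A₃ * (A₁ᵀ * (A₂ * A₃ᵀ))))
  have e2 : specRad M₂ = specRad (A₃ * A₁ᵀ * A₂ * A₃ᵀ * A₁ * A₂ᵀ) := by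
    rw [hM₂def]
    simpa only [← mul_assoc] using specRad_mul_comm A₂ᵀ (A₃ * (A₁ᵀ * (A₂ * (A₃ᵀ * A₁))))
  have e3 : specRad (A₃ * A₁ᵀ * A₂ * A₃ᵀ * A₁ * A₂ᵀ) = specRad M₁ := by
    rw [hM₁def]
    simpa only [← mul_assoc] using specRad_mul_comm A₃ (A₁ᵀ * (A₂ * (A₃ᵀ * (A₁ * A₂ᵀ))))
  have e4 : specRad M₁ = specRad (A₂ * A₃ᵀ * A₁ * A₂ᵀ * A₃ * A₁ᵀ) := by
    rw [hM₁def]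
    simpa only [← mul_assoc] using specRad_mul_comm A₁ᵀ (A₂ * (A₃ᵀ * (A₁ * (A₂ᵀ * A₃))))
  have e5 : specRad (A₂ * A₃ᵀ * A₁ * A₂ᵀ * A₃ * A₁ᵀ) = specRad M₃ := by
    rw [hM₃def]
    simpa only [← mul_assoc] using specRad_mul_comm A₂ (A₃ᵀ * (A₁ * (A₂ᵀ * (A₃ * A₁ᵀ))))
  have hρ1 : specRad M₁ = specRad D := (e1.trans (e2.trans e3)).symm
  have hρ2 : specRad M₂ = specRad D := e1.symm
  have hρ3 : specRad M₃ = specRad D := (e1.trans (e2.trans (e3.trans (e4.trans e5)))).symm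
  rw [hρ1, hρ2, hρ3] at h2'
  have hcollapse : specRad D ^ (1/3:ℝ) * (specRad D ^ (1/3:ℝ) * specRad D ^ (1/3:ℝ)) =
      specRad D := by
    have h13 : (1/3:ℝ) = (((3:ℕ):ℝ))⁻¹ := by norm_num
    calc specRad D ^ (1/3:ℝ) * (specRad D ^ (1/3:ℝ) * specRad D ^ (1/3:ℝ))
        = (specRad D ^ ((((3:ℕ):ℝ))⁻¹)) ^ (3:ℕ) := by rw [← h13]; ring
      _ = specRad D := Real.rpow_inv_natCast_pow (specRad_nonneg D) (by norm_num)
  rw [hcollapse] at h2'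
  exact Real.rpow_le_rpow (specRad_nonneg _) h2' (by norm_num)

lemma specRad_of_isEmpty [IsEmpty N] (X : Matrix N N ℝ) : specRad X = 0 := by
  have hsub : Subsingleton (Matrix N N ℂ) :=
    ⟨fun a b => by ext i j; exact (IsEmpty.false i).elim⟩
  unfold specRad
  rw [@spectrum.SpectralRadius.of_subsingleton ℂ _ _ _ _ hsub]
  simp

lemma l2OpNorm_of_isEmpty [IsEmpty N] (X : Matrix N N ℝ) : l2OpNorm X = 0 := by
  have hE : Subsingleton (EuclideanSpace ℝ N) :=
    ⟨fun a b => by ext i; exact (IsEmpty.false i).elim⟩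
  refine le_antisymm ?_ (norm_nonneg _)
  refine ContinuousLinearMap.opNorm_le_bound _ le_rfl fun x => ?_
  rw [@Subsingleton.elim _ hE (Matrix.toEuclideanCLM (𝕜 := ℝ) X x) 0]
  simp

end Auxiliary

theorem stmt17 {N : Type*} [Fintype N] [DecidableEq N] (A₁ A₂ A₃ : Matrix N N ℝ)
    (h1 : ∀ i j, 0 ≤ A₁ i j) (h2 : ∀ i j, 0 ≤ A₂ i j) (h3 : ∀ i j, 0 ≤ A₃ i j) :
    l2OpNorm (hadPow A₁ (1/3) ⊙ hadPow A₂ (1/3) ⊙ hadPow A₃ (1/3)) ≤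
        specRad (hadPow (A₁ᵀ * A₂ * A₃ᵀ * A₁ * A₂ᵀ * A₃) (1/3) ⊙
            hadPow (A₂ᵀ * A₃ * A₁ᵀ * A₂ * A₃ᵀ * A₁) (1/3) ⊙
            hadPow (A₃ᵀ * A₁ * A₂ᵀ * A₃ * A₁ᵀ * A₂) (1/3)) ^ ((1 : ℝ) / 6) ∧
      specRad (hadPow (A₁ᵀ * A₂ * A₃ᵀ * A₁ * A₂ᵀ * A₃) (1/3) ⊙
            hadPow (A₂ᵀ * A₃ * A₁ᵀ * A₂ * A₃ᵀ * A₁) (1/3) ⊙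
            hadPow (A₃ᵀ * A₁ * A₂ᵀ * A₃ * A₁ᵀ * A₂) (1/3)) ^ ((1 : ℝ) / 6) ≤
        specRad (A₁ * A₂ᵀ * A₃ * A₁ᵀ * A₂ * A₃ᵀ) ^ ((1 : ℝ) / 6) := by
  rcases isEmpty_or_nonempty N with hN | hN
  · -- degenerate case : everything is zero
    constructor
    · rw [l2OpNorm_of_isEmpty, specRad_of_isEmpty, Real.zero_rpow (by norm_num)]
    · rw [specRad_of_isEmpty, specRad_of_isEmpty]
  · exact ⟨part1 A₁ A₂ A₃ h1 h2 h3, part2 A₁ A₂ A₃ h1 h2 h3⟩
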